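/- Let ρ > 0 and λ > 0 be real numbers and set c = √(λ/ρ). If u : ℝ × ℝ → ℝ is twice continuously differentiable and satisfies ρ ∂²u/∂t² = λ ∂²u/∂η² for all (η, t) ∈ ℝ², then there exist twice continuously differentiable functions u₋, u₊ : ℝ → ℝ such that u(η, t) = u₋(η − c t) + u₊(η + c t) for all (η, t); i.e. every solution of the wave equation is a superposition of two traveling waves of permanent form. -/

import Mathlib

/-- Second partial derivative of `u(η, t)` with respect to `η` (first argument). -/
noncomputable def d2eta (u : ℝ × ℝ → ℝ) (η t : ℝ) : ℝ :=
  deriv (fun s => deriv (fun s' => u (s', t)) s) η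

/-- Second partial derivative of `u(η, t)` with respect to `t` (second argument). -/
noncomputable def d2t (u : ℝ × ℝ → ℝ) (η t : ℝ) : ℝ :=
  deriv (fun s => deriv (fun s' => u (η, s')) s) t

/-- Decomposition of a continuous linear map on `ℝ × ℝ` in the standard basis. -/
lemma lin_decomp {M : Type*} [NormedAddCommGroup M] [NormedSpace ℝ M]
    (f : ℝ × ℝ →L[ℝ] M) (x y : ℝ) :
    f (x, y) = x • f (1, 0) + y • f (0, 1) := by
  have h : (x, y) = x • ((1 : ℝ), (0 : ℝ)) + y • ((0 : ℝ), (1 : ℝ)) := by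
    simp [Prod.ext_iff]
  rw [h, map_add, map_smul, map_smul]

/-- d'Alembert: every solution of the wave equation `ρ u_tt = λ u_ηη` is a
superposition of two travelling waves of permanent form. -/
theorem wave_equation_solution_is_superposition
    (ρ lam : ℝ) (hρ : 0 < ρ) (hlam : 0 < lam)
    (c : ℝ) (hc : c = Real.sqrt (lam / ρ))
    (u : ℝ × ℝ → ℝ) (hu : ContDiff ℝ 2 u)
    (heq : ∀ η t : ℝ, ρ * d2t u η t = lam * d2eta u η t) :
    ∃ uminus uplus : ℝ → ℝ, ContDiff ℝ 2 uminus ∧ ContDiff ℝ 2 uplus ∧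
      ∀ η t : ℝ, u (η, t) = uminus (η - c * t) + uplus (η + c * t) := by
  have hc0 : 0 < c := by rw [hc]; exact Real.sqrt_pos.2 (div_pos hlam hρ)
  have hc2 : c ^ 2 = lam / ρ := by
    rw [hc, sq, Real.mul_self_sqrt (div_pos hlam hρ).le]
  have hud : Differentiable ℝ u := hu.differentiable (by norm_num)
  set F := fderiv ℝ u with hFdef
  have hFc : ContDiff ℝ 1 F := hu.fderiv_right (by norm_num)
  have hFd : Differentiable ℝ F := hFc.differentiable (by norm_num)
  set F' := fderiv ℝ F with hF'def
  -- directional derivative of F along a line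
  have key : ∀ (z : ℝ × ℝ) (line : ℝ → ℝ × ℝ) (d : ℝ × ℝ) (s : ℝ),
      HasDerivAt line d s →
      HasDerivAt (fun x => F (line x) z) (F' (line s) d z) s := by
    intro z line d s hl
    have h1 : HasFDerivAt F (F' (line s)) (line s) := (hFd (line s)).hasFDerivAt
    have h2 := ((ContinuousLinearMap.apply ℝ ℝ z).hasFDerivAt.comp (line s) h1)
      |>.comp_hasDerivAt s hl
    exact h2
  have pd1 : ∀ (t s : ℝ), HasDerivAt (fun s' => u (s', t)) (F (s, t) (1, 0)) s := by
    intro t s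
    have h := (hud (s, t)).hasFDerivAt.comp_hasDerivAt s
      (HasDerivAt.prodMk (hasDerivAt_id s) (hasDerivAt_const s t))
    exact h
  have pd2 : ∀ (η s : ℝ), HasDerivAt (fun s' => u (η, s')) (F (η, s) (0, 1)) s := by
    intro η s
    have h := (hud (η, s)).hasFDerivAt.comp_hasDerivAt s
      (HasDerivAt.prodMk (hasDerivAt_const s η) (hasDerivAt_id s))
    exact h
  have d2eta_eq : ∀ η t : ℝ, d2eta u η t = F' (η, t) (1, 0) (1, 0) := by
    intro η t
    have h1 : (fun s => deriv (fun s' => u (s', t)) s) = fun s => F (s, t) (1, 0) := by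
      funext s; exact (pd1 t s).deriv
    have h2 : HasDerivAt (fun s => F (s, t) (1, 0)) (F' (η, t) (1, 0) (1, 0)) η := by
      have := key (1, 0) (fun s => (s, t)) (1, 0) η
        (HasDerivAt.prodMk (hasDerivAt_id η) (hasDerivAt_const η t))
      simpa using this
    rw [d2eta, h1, h2.deriv]
  have d2t_eq : ∀ η t : ℝ, d2t u η t = F' (η, t) (0, 1) (0, 1) := by
    intro η t
    have h1 : (fun s => deriv (fun s' => u (η, s')) s) = fun s => F (η, s) (0, 1) := by
      funext s; exact (pd2 η s).deriv
    have h2 : HasDerivAt (fun s => F (η, s) (0, 1)) (F' (η, t) (0, 1) (0, 1)) t := by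
      have := key (0, 1) (fun s => (η, s)) (0, 1) t
        (HasDerivAt.prodMk (hasDerivAt_const t η) (hasDerivAt_id t))
      simpa using this
    rw [d2t, h1, h2.deriv]
  have pde : ∀ p : ℝ × ℝ, ρ * F' p (0, 1) (0, 1) = lam * F' p (1, 0) (1, 0) := by
    intro p
    have := heq p.1 p.2
    rwa [d2eta_eq, d2t_eq] at this
  have hsymm : ∀ p : ℝ × ℝ, F' p (1, 0) (0, 1) = F' p (0, 1) (1, 0) :=
    fun p => (hu.contDiffAt.isSymmSndFDerivAt (by simp)) (1, 0) (0, 1)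
  -- characteristic coordinates
  set L : ℝ → ℝ → ℝ × ℝ := fun a b => ((a + b) / 2, (b - a) / (2 * c)) with hLdef
  set w : ℝ → ℝ → ℝ := fun a b =>
    (1 / 2) * F (L a b) (1, 0) + (1 / (2 * c)) * F (L a b) (0, 1) with hwdef
  have hcne : (2 : ℝ) * c ≠ 0 := by positivity
  -- derivative of u ∘ L in b
  have claim3 : ∀ a b : ℝ, HasDerivAt (fun y => u (L a y)) (w a b) b := by
    intro a b
    have hline : HasDerivAt (fun y => L a y) (1 / 2, 1 / (2 * c)) b := by
      exact HasDerivAt.prodMk (((hasDerivAt_id b).const_add a).div_const 2)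
        (((hasDerivAt_id b).sub_const a).div_const (2 * c))
    have h := (hud (L a b)).hasFDerivAt.comp_hasDerivAt b hline
    have hval : F (L a b) (1 / 2, 1 / (2 * c)) = w a b := by
      rw [lin_decomp]; simp [hwdef, smul_eq_mul]
    rw [← hval]
    exact h
  -- derivative of w in a is zero
  have claim4 : ∀ b a : ℝ, HasDerivAt (fun x => w x b) 0 a := by
    intro b a
    have hline : HasDerivAt (fun x => L x b) (1 / 2, -1 / (2 * c)) a := by
      have h2 : HasDerivAt (fun x : ℝ => (b - x) / (2 * c)) (-1 / (2 * c)) a := by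
        simpa using (((hasDerivAt_id a).const_sub b).div_const (2 * c))
      exact HasDerivAt.prodMk (((hasDerivAt_id a).add_const b).div_const 2) h2
    have h1 := key (1, 0) (fun x => L x b) (1 / 2, -1 / (2 * c)) a hline
    have h2 := key (0, 1) (fun x => L x b) (1 / 2, -1 / (2 * c)) a hline
    have h := (h1.const_mul (1 / 2)).add (h2.const_mul (1 / (2 * c)))
    have hz : (1 / 2) * F' (L a b) (1 / 2, -1 / (2 * c)) (1, 0)
        + (1 / (2 * c)) * F' (L a b) (1 / 2, -1 / (2 * c)) (0, 1) = 0 := by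
      set P := L a b
      have e1 : F' P (1 / 2, -1 / (2 * c)) = ((1 : ℝ) / 2) • F' P (1, 0)
          + (-1 / (2 * c)) • F' P (0, 1) := lin_decomp (F' P) _ _
      rw [e1]
      simp only [ContinuousLinearMap.add_apply, ContinuousLinearMap.coe_smul',
        Pi.smul_apply, smul_eq_mul]
      have hs := hsymm P
      have hp := pde P
      have hC : F' P (0, 1) (0, 1) = c ^ 2 * F' P (1, 0) (1, 0) := by
        rw [hc2]
        field_simp at hp ⊢
        linarith [hp]
      rw [hC, hs]
      have : c ≠ 0 := ne_of_gt hc0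
      field_simp
      ring
    rw [← hz]
    exact h
  have wconst : ∀ a b : ℝ, w a b = w 0 b := by
    intro a b
    exact is_const_of_deriv_eq_zero
      (fun x => (claim4 b x).differentiableAt)
      (fun x => (claim4 b x).deriv) a 0
  -- main identity
  have main : ∀ a b : ℝ, u (L a b) = u (L a 0) + u (L 0 b) - u (L 0 0) := by
    intro a b
    have hg : ∀ y : ℝ, HasDerivAt (fun y => u (L a y) - u (L 0 y)) 0 y := by
      intro y
      have h := (claim3 a y).sub (claim3 0 y)
      rwa [wconst a y, sub_self] at h
    have := is_const_of_deriv_eq_zero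
      (fun y => (hg y).differentiableAt) (fun y => (hg y).deriv) b 0
    linarith [this]
  refine ⟨fun x => u (x / 2, -x / (2 * c)) - u (0, 0), fun x => u (x / 2, x / (2 * c)),
    ?_, ?_, ?_⟩
  · exact (hu.comp (ContDiff.prodMk (contDiff_id.div_const 2)
      ((contDiff_id.neg).div_const (2 * c)))).sub contDiff_const
  · exact hu.comp (ContDiff.prodMk (contDiff_id.div_const 2) (contDiff_id.div_const (2 * c)))
  · intro η t
    have h := main (η - c * t) (η + c * t)
    have hL : L (η - c * t) (η + c * t) = (η, t) := by
      simp only [hLdef, Prod.mk.injEq]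
      constructor
      · ring
      · field_simp
        ring
    have hL1 : L (η - c * t) 0 = ((η - c * t) / 2, -(η - c * t) / (2 * c)) := by
      simp only [hLdef, Prod.mk.injEq]
      constructor
      · ring
      · field_simp
        ring
    have hL2 : L 0 (η + c * t) = ((η + c * t) / 2, (η + c * t) / (2 * c)) := by
      simp only [hLdef, Prod.mk.injEq]
      constructor
      · ring
      · field_simp
        ring
    have hL0 : L 0 0 = (0, 0) := by simp [hLdef]
    rw [hL, hL1, hL2, hL0] at h
    rw [h]
    ring
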